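/- Let p be a prime, k an algebraically closed field of characteristic p, e ≥ 1, q = p^e, and V a finite-dimensional k-vector space. Let F : V → V be an additive map satisfying F(c·v) = c^q·F(v) for all c ∈ k, v ∈ V (i.e. F is semilinear over the e-th Frobenius iterate of k), and suppose F is injective. Then V has a k-basis consisting of vectors fixed by F: there is a basis (b_1, …, b_n) of V with F(b_i) = b_i for all i. -/

import Mathlib

open Polynomial Module Submodule

lemma dieu_exists_fixed
    (p : ℕ) [Fact p.Prime]
    (k : Type) [Field k] [IsAlgClosed k] [CharP k p]
    (e : ℕ) (he : 1 ≤ e)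
    (V : Type) [AddCommGroup V] [Module k V] [FiniteDimensional k V] [Nontrivial V]
    (F : V → V)
    (hadd : ∀ x y : V, F (x + y) = F x + F y)
    (hsl : ∀ (c : k) (v : V), F (c • v) = c ^ p ^ e • F v)
    (hinj : Function.Injective F) :
    ∃ w : V, w ≠ 0 ∧ F w = w := by
  classical
  have hp2 : 2 ≤ p := (Fact.out : p.Prime).two_le
  set q := p ^ e with hqdef
  have hq1 : 1 < q := Nat.one_lt_pow (by omega) (by omega)
  have hq0 : q ≠ 0 := by omega
  set F' : V →+ V := AddMonoidHom.mk' F hadd with hF'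
  have hF'app : ∀ x, F' x = F x := fun _ => rfl
  have hF0 : F 0 = 0 := F'.map_zero
  obtain ⟨v, hv0⟩ := exists_ne (0 : V)
  -- the iterates eventually become dependent
  have hdep : ∃ n, ¬ LinearIndependent k (fun i : Fin (n + 1) => F^[(i : ℕ)] v) := by
    refine ⟨finrank k V, fun h => ?_⟩
    have := h.fintype_card_le_finrank
    simp at this
  have hNpos : 0 < Nat.find hdep := by
    rcases Nat.eq_zero_or_pos (Nat.find hdep) with h | h
    · exfalso
      have hspec := Nat.find_spec hdep
      rw [h] at hspec
      apply hspec
      haveI : Unique (Fin (0 + 1)) := inferInstanceAs (Unique (Fin 1))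
      apply linearIndependent_unique_iff.mpr
      simpa using hv0
    · exact h
  obtain ⟨m', hmN⟩ : ∃ m', Nat.find hdep = m' + 1 :=
    ⟨Nat.find hdep - 1, (Nat.succ_pred_eq_of_pos hNpos).symm⟩
  have hind : LinearIndependent k (fun i : Fin (m' + 1) => F^[(i : ℕ)] v) := by
    have := Nat.find_min hdep (show m' < Nat.find hdep by omega)
    rwa [not_not] at this
  have hdepN : ¬ LinearIndependent k (fun i : Fin (m' + 1 + 1) => F^[(i : ℕ)] v) := by
    have := Nat.find_spec hdep
    rwa [hmN] at this
  -- hence F^[m'+1] v lies in the span of the previous iterates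
  have hmem : F^[m' + 1] v ∈ span k (Set.range fun i : Fin (m' + 1) => F^[(i : ℕ)] v) := by
    by_contra hmem
    apply hdepN
    have heq : (fun i : Fin (m' + 1 + 1) => F^[(i : ℕ)] v)
        = Fin.snoc (fun i : Fin (m' + 1) => F^[(i : ℕ)] v) (F^[m' + 1] v) := by
      funext i
      refine Fin.lastCases ?_ (fun j => ?_) i
      · simp [Fin.snoc_last]
      · simp [Fin.snoc_castSucc]
    rw [heq]
    exact linearIndependent_fin_snoc.mpr ⟨hind, hmem⟩
  obtain ⟨c, hc⟩ := (Submodule.mem_span_range_iff_exists_fun k).mp hmem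
  set c' : ℕ → k := fun n => if h : n < m' + 1 then c ⟨n, h⟩ else 0 with hc'def
  have hc'eq : ∀ i : Fin (m' + 1), c' (i : ℕ) = c i := by
    intro i
    simp [hc'def, i.isLt]
    intro h; exact absurd i.isLt (by omega)
  have hcsum : ∑ i ∈ Finset.range (m' + 1), c' i • F^[i] v = F^[m' + 1] v := by
    rw [← hc, Finset.sum_range fun i => c' i • F^[i] v]
    exact Finset.sum_congr rfl fun i _ => by rw [hc'eq]
  -- F^[m'+1] v ≠ 0
  have hFm0 : F^[m' + 1] v ≠ 0 := by
    intro h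
    apply hv0
    have : F^[m' + 1] v = F^[m' + 1] 0 := by rw [h, Function.iterate_fixed hF0]
    exact hinj.iterate (m' + 1) this
  -- the polynomial recursion
  set P : ℕ → k[X] := fun n =>
    Nat.rec (Polynomial.C (c' 0) * Polynomial.X ^ q)
      (fun n ih => ih ^ q + Polynomial.C (c' (n + 1)) * Polynomial.X ^ q) n with hPdef
  have hP0 : P 0 = Polynomial.C (c' 0) * Polynomial.X ^ q := rfl
  have hPs : ∀ n, P (n + 1) = P n ^ q + Polynomial.C (c' (n + 1)) * Polynomial.X ^ q :=
    fun n => rfl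
  have hdvd : ∀ n, Polynomial.X ^ q ∣ P n := by
    intro n
    induction n with
    | zero => exact ⟨Polynomial.C (c' 0), mul_comm _ _⟩
    | succ n ih =>
      rw [hPs]
      exact dvd_add (dvd_pow ih hq0) ⟨Polynomial.C (c' (n + 1)), mul_comm _ _⟩
  have hco : ∀ n j, j < q → (P n).coeff j = 0 :=
    fun n => Polynomial.X_pow_dvd_iff.mp (hdvd n)
  have hcoq : ∀ n, (P n ^ q).coeff q = 0 := by
    intro n
    have h1 : Polynomial.X ^ (q * q) ∣ P n ^ q := by
      have := pow_dvd_pow_of_dvd (hdvd n) q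
      rwa [← pow_mul] at this
    exact Polynomial.X_pow_dvd_iff.mp h1 q (by nlinarith)
  have hPzero : ∀ n, P n = 0 → ∀ j ≤ n, c' j = 0 := by
    intro n
    induction n with
    | zero =>
      intro h j hj
      interval_cases j
      rw [hP0, mul_eq_zero] at h
      rcases h with h | h
      · exact Polynomial.C_eq_zero.mp h
      · exact absurd h (pow_ne_zero _ Polynomial.X_ne_zero)
    | succ n ih =>
      intro h j hj
      rw [hPs] at h
      have hcq : c' (n + 1) = 0 := by
        have := congrArg (fun f => Polynomial.coeff f q) h
        simpa [hcoq n] using this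
      have hPn : P n = 0 := by
        rw [hcq] at h
        simpa [pow_eq_zero_iff hq0] using h
      rcases Nat.lt_or_ge j (n + 1) with hj' | hj'
      · exact ih hPn j (by omega)
      · have : j = n + 1 := by omega
        rw [this]; exact hcq
  have hPm' : P m' ≠ 0 := by
    intro h
    apply hFm0
    rw [← hcsum]
    refine Finset.sum_eq_zero fun i hi => ?_
    rw [Finset.mem_range] at hi
    rw [hPzero m' h i (by omega), zero_smul]
  -- find a nonzero root of P m' - X
  have hQ1 : (P m' - Polynomial.X).coeff 1 = -1 := by
    simp [Polynomial.coeff_sub, hco m' 1 hq1]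
  have hQ0 : (P m' - Polynomial.X).coeff 0 = 0 := by
    simp [Polynomial.coeff_sub, hco m' 0 (by omega)]
  obtain ⟨R, hR⟩ := Polynomial.X_dvd_iff.mpr hQ0
  have hR0 : R.coeff 0 = -1 := by
    have : (P m' - Polynomial.X).coeff 1 = R.coeff 0 := by
      rw [hR]; exact Polynomial.coeff_X_mul R 0
    rw [← this, hQ1]
  have hRdeg : R.degree ≠ 0 := by
    intro hdeg
    have hRC : R = Polynomial.C (R.coeff 0) := Polynomial.eq_C_of_degree_le_zero hdeg.le
    apply hPm'
    have h1 : P m' = (P m' - Polynomial.X) + Polynomial.X := by ring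
    rw [h1, hR, hRC, hR0]
    simp
  obtain ⟨t, ht⟩ := IsAlgClosed.exists_root R hRdeg
  have ht' : R.eval t = 0 := ht
  have ht0 : t ≠ 0 := by
    intro h
    rw [h, ← Polynomial.coeff_zero_eq_eval_zero, hR0] at ht'
    exact (neg_ne_zero.mpr one_ne_zero) ht'
  have hPt : (P m').eval t = t := by
    have h1 : (P m' - Polynomial.X).eval t = 0 := by rw [hR]; simp [ht']
    simpa [sub_eq_zero] using h1
  -- the fixed vector
  set x : ℕ → k := fun n => (P n).eval t with hxdef
  have hx0 : x 0 = c' 0 * t ^ q := by simp [hxdef, hP0]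
  have hxs : ∀ n, x (n + 1) = x n ^ q + c' (n + 1) * t ^ q := by
    intro n; simp [hxdef, hPs n]
  have hxm : x m' = t := hPt
  refine ⟨∑ i ∈ Finset.range (m' + 1), x i • F^[i] v, ?_, ?_⟩
  · intro h
    rw [Finset.sum_range fun i => x i • F^[i] v] at h
    have := Fintype.linearIndependent_iff.mp hind (fun i : Fin (m' + 1) => x (i : ℕ)) h
      (Fin.last m')
    simp only [Fin.val_last] at this
    rw [hxm] at this
    exact ht0 this
  · have hFsum : F (∑ i ∈ Finset.range (m' + 1), x i • F^[i] v)
        = ∑ i ∈ Finset.range (m' + 1), (x i ^ q) • F^[i + 1] v := by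
      rw [show F (∑ i ∈ Finset.range (m' + 1), x i • F^[i] v)
          = F' (∑ i ∈ Finset.range (m' + 1), x i • F^[i] v) from rfl, map_sum]
      refine Finset.sum_congr rfl fun i _ => ?_
      rw [hF'app, hsl, Function.iterate_succ_apply']
    rw [hFsum]
    rw [Finset.sum_range_succ (fun i => x i ^ q • F^[i + 1] v), hxm, ← hcsum, Finset.smul_sum]
    rw [Finset.sum_range_succ' (fun i => x i • F^[i] v) m',
        Finset.sum_range_succ' (fun i => t ^ q • c' i • F^[i] v) m']
    have hterm : ∀ i : ℕ, t ^ q • c' i • F^[i] v = (c' i * t ^ q) • F^[i] v := by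
      intro i; rw [smul_smul, mul_comm]
    rw [hterm 0, hx0, ← add_assoc, ← Finset.sum_add_distrib]
    congr 1
    refine Finset.sum_congr rfl fun i _ => ?_
    rw [hterm (i + 1), hxs i, add_smul]

/-- **Dieudonné.** Let `k` be an algebraically closed field of
characteristic `p`, `q = pᵉ`, and `V` a finite-dimensional `k`-vector space with
an injective additive `q`-semilinear map `F : V → V`.  Then `V` has a `k`-basis
consisting of `F`-fixed vectors. -/
theorem basis_of_frobenius_fixed_vectors
    (p : ℕ) [Fact p.Prime]
    (k : Type) [Field k] [IsAlgClosed k] [CharP k p]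
    (e : ℕ) (he : 1 ≤ e)
    (V : Type) [AddCommGroup V] [Module k V] [FiniteDimensional k V]
    (F : V → V)
    (hadd : ∀ x y : V, F (x + y) = F x + F y)
    (hsl : ∀ (c : k) (v : V), F (c • v) = c ^ p ^ e • F v)
    (hinj : Function.Injective F) :
    ∃ b : Basis (Fin (Module.finrank k V)) k V, ∀ i, F (b i) = b i := by
  classical
  have hp2 : 2 ≤ p := (Fact.out : p.Prime).two_le
  have hq1 : 1 < p ^ e := Nat.one_lt_pow (by omega) (by omega)
  set q := p ^ e with hqdef
  set F' : V →+ V := AddMonoidHom.mk' F hadd with hF'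
  have hF'app : ∀ x, F' x = F x := fun _ => rfl
  have hF0 : F 0 = 0 := F'.map_zero
  have hFsub : ∀ x y : V, F (x - y) = F x - F y := fun x y => F'.map_sub x y
  -- Artin–Schreier-type equations are solvable
  have hAS : ∀ cc : k, ∃ a : k, a ^ q - a = cc := by
    intro cc
    have hlt : (Polynomial.X + Polynomial.C cc).degree < (Polynomial.X ^ q : k[X]).degree := by
      rw [Polynomial.degree_X_pow, Polynomial.degree_X_add_C]
      exact_mod_cast hq1
    have hdeg : (Polynomial.X ^ q - (Polynomial.X + Polynomial.C cc) : k[X]).degree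
        = (q : WithBot ℕ) := by
      rw [Polynomial.degree_sub_eq_left_of_degree_lt hlt, Polynomial.degree_X_pow]
    obtain ⟨a, ha⟩ := IsAlgClosed.exists_root _
      (by rw [hdeg]; exact_mod_cast (by omega : q ≠ 0))
    refine ⟨a, ?_⟩
    have h1 : a ^ q - (a + cc) = 0 := by simpa using ha
    linear_combination h1
  -- q-th roots exist
  have hroot : ∀ cc : k, ∃ a : k, a ^ q = cc := fun cc =>
    IsAlgClosed.exists_pow_nat_eq cc (by omega)
  set S : Set V := {v : V | F v = v} with hSdef
  set U : Submodule k V := span k S with hUdef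
  -- F maps U into U
  have hFU : ∀ u ∈ U, F u ∈ U := by
    intro u hu
    induction hu using span_induction with
    | mem x hx => rw [hx.out]; exact subset_span hx
    | zero => rw [hF0]; exact zero_mem U
    | add x y hx hy ihx ihy => rw [hadd]; exact add_mem ihx ihy
    | smul a x hx ih => rw [hsl]; exact smul_mem U _ ih
  -- every element of U is F of an element of U
  have hUF : ∀ u ∈ U, ∃ a ∈ U, F a = u := by
    intro u hu
    induction hu using span_induction with
    | mem x hx => exact ⟨x, subset_span hx, hx.out⟩
    | zero => exact ⟨0, zero_mem U, hF0⟩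
    | add x y hx hy ihx ihy =>
      obtain ⟨a, ha, hfa⟩ := ihx
      obtain ⟨b, hb, hfb⟩ := ihy
      exact ⟨a + b, add_mem ha hb, by rw [hadd, hfa, hfb]⟩
    | smul a x hx ih =>
      obtain ⟨b, hb, hfb⟩ := ih
      obtain ⟨a', ha'⟩ := hroot a
      exact ⟨a' • b, smul_mem U _ hb, by rw [hsl, ha', hfb]⟩
  have hpre : ∀ v : V, F v ∈ U → v ∈ U := by
    intro v hv
    obtain ⟨a, ha, hfa⟩ := hUF (F v) hv
    rwa [hinj hfa] at ha
  -- can solve F a - a = u within U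
  have hASU : ∀ u ∈ U, ∃ a ∈ U, F a - a = u := by
    intro u hu
    rw [hUdef, mem_span_set'] at hu
    obtain ⟨n, f, g, hfg⟩ := hu
    choose a ha using fun i : Fin n => hAS (f i)
    refine ⟨∑ i, a i • (g i : V), ?_, ?_⟩
    · exact sum_mem fun i _ => smul_mem U _ (subset_span (g i).2)
    · have hFsum : F (∑ i, a i • (g i : V)) = ∑ i, (a i ^ q) • (g i : V) := by
        rw [show F (∑ i, a i • (g i : V)) = F' (∑ i, a i • (g i : V)) from rfl, map_sum]
        refine Finset.sum_congr rfl fun i _ => ?_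
        rw [hF'app, hsl, (g i).2.out]
      rw [hFsum, ← Finset.sum_sub_distrib]
      rw [← hfg]
      refine Finset.sum_congr rfl fun i _ => ?_
      rw [← sub_smul, ha i]
  -- fixed vectors span V
  have htop : U = ⊤ := by
    by_contra hne
    haveI : Nontrivial (V ⧸ U) := Submodule.Quotient.nontrivial_iff.mpr hne
    set G : V ⧸ U → V ⧸ U := fun xq => Quotient.liftOn' xq
      (fun a => Submodule.Quotient.mk (F a))
      (by
        intro a b hr
        have hab : (Submodule.Quotient.mk a : V ⧸ U) = Submodule.Quotient.mk b :=
          Quotient.sound' hr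
        rw [Submodule.Quotient.eq] at hab ⊢
        rw [← hFsub]
        exact hFU _ hab) with hGdef
    have hGmk : ∀ a : V, G (Submodule.Quotient.mk a) = Submodule.Quotient.mk (F a) :=
      fun a => rfl
    have hGadd : ∀ x y : V ⧸ U, G (x + y) = G x + G y := by
      intro x y
      obtain ⟨a, rfl⟩ := Submodule.Quotient.mk_surjective U x
      obtain ⟨b, rfl⟩ := Submodule.Quotient.mk_surjective U y
      rw [← Submodule.Quotient.mk_add, hGmk, hGmk, hGmk, hadd, Submodule.Quotient.mk_add]
    have hGsl : ∀ (c : k) (x : V ⧸ U), G (c • x) = c ^ q • G x := by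
      intro c x
      obtain ⟨a, rfl⟩ := Submodule.Quotient.mk_surjective U x
      rw [← Submodule.Quotient.mk_smul, hGmk, hGmk, hsl, Submodule.Quotient.mk_smul]
    have hGinj : Function.Injective G := by
      intro x y h
      obtain ⟨a, rfl⟩ := Submodule.Quotient.mk_surjective U x
      obtain ⟨b, rfl⟩ := Submodule.Quotient.mk_surjective U y
      rw [hGmk, hGmk, Submodule.Quotient.eq, ← hFsub] at h
      rw [Submodule.Quotient.eq]
      exact hpre _ h
    obtain ⟨wq, hw0, hGw⟩ := dieu_exists_fixed p k e he (V ⧸ U) G hGadd hGsl hGinj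
    obtain ⟨w, rfl⟩ := Submodule.Quotient.mk_surjective U wq
    rw [hGmk, Submodule.Quotient.eq] at hGw
    obtain ⟨a, haU, ha⟩ := hASU (-(F w - w)) (neg_mem hGw)
    have hfix : F (w + a) = w + a := by
      have : F (w + a) - (w + a) = (F w - w) + (F a - a) := by
        rw [hadd]; abel
      rw [ha] at this
      have h2 : F (w + a) - (w + a) = 0 := by rw [this]; abel
      have := sub_eq_zero.mp h2
      exact this
    have hmem : w + a ∈ U := subset_span (show F (w + a) = w + a from hfix)
    have : (Submodule.Quotient.mk w : V ⧸ U) = 0 := by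
      have h1 : (Submodule.Quotient.mk (w + a) : V ⧸ U) = 0 :=
        (Submodule.Quotient.mk_eq_zero U).mpr hmem
      have h2 : (Submodule.Quotient.mk a : V ⧸ U) = 0 :=
        (Submodule.Quotient.mk_eq_zero U).mpr haU
      rw [Submodule.Quotient.mk_add, h2, add_zero] at h1
      exact h1
    exact hw0 this
  -- extract a basis from the fixed vectors
  obtain ⟨b, hbS, hbspan, hbli⟩ := exists_linearIndependent k S
  have hspan_top : ⊤ ≤ span k (Set.range ((↑) : b → V)) := by
    rw [Subtype.range_coe, hbspan, ← hUdef, htop]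
  set B : Basis b k V := Basis.mk hbli hspan_top with hBdef
  haveI : Fintype b := hbli.setFinite.fintype
  have hcard : Fintype.card b = finrank k V := (Module.finrank_eq_card_basis B).symm
  set eqv : b ≃ Fin (finrank k V) := Fintype.equivFinOfCardEq hcard with heqv
  refine ⟨B.reindex eqv, fun i => ?_⟩
  rw [Module.Basis.reindex_apply, hBdef, Basis.mk_apply]
  exact (hbS (eqv.symm i).2).out
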